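/- Let f : ℝ → ℝ be strictly increasing and C^{1+α} on an interval [u, w] (for some α > 0), with Df bounded below by a positive constant c1 and the α-Hölder constant of Df bounded by M on [u,w]. Then for any points u ≤ z1 < z2 < z3 < z4 ≤ w, |Dist(z1,z2,z3,z4;f) - 1| ≤ K (z4-z1)^α, where K depends only on c1, M and w - u. -/

import Mathlib

noncomputable def Cr (a1 a2 a3 a4 : ℝ) : ℝ :=
  ((a2 - a1) * (a4 - a3)) / ((a3 - a1) * (a4 - a2))

noncomputable def crDist (a1 a2 a3 a4 : ℝ) (f : ℝ → ℝ) : ℝ :=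
  Cr (f a1) (f a2) (f a3) (f a4) / Cr a1 a2 a3 a4

theorem cross_ratio_distortion_smooth_estimate
    (f f' : ℝ → ℝ) (u w : ℝ) (huw : u < w)
    (hmono : StrictMonoOn f (Set.Icc u w))
    (α : ℝ) (hα : 0 < α)
    (c1 M : ℝ) (hc1 : 0 < c1) (hM : 0 ≤ M)
    (hderiv : ∀ x ∈ Set.Icc u w, HasDerivWithinAt f (f' x) (Set.Icc u w) x)
    (hlow : ∀ x ∈ Set.Icc u w, c1 ≤ f' x)
    (hHolder : ∀ x ∈ Set.Icc u w, ∀ y ∈ Set.Icc u w, |f' x - f' y| ≤ M * |x - y| ^ α) :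
    ∃ K > 0, ∀ z1 z2 z3 z4 : ℝ,
      u ≤ z1 → z1 < z2 → z2 < z3 → z3 < z4 → z4 ≤ w →
      |crDist z1 z2 z3 z4 f - 1| ≤ K * (z4 - z1) ^ α := by
  have hcont : ContinuousOn f (Set.Icc u w) :=
    fun x hx => (hderiv x hx).continuousWithinAt
  -- upper bound for f'
  set C2 : ℝ := f' u + M * (w - u) ^ α with hC2def
  have huIcc : u ∈ Set.Icc u w := Set.left_mem_Icc.mpr huw.le
  have hup : ∀ x ∈ Set.Icc u w, f' x ≤ C2 := by
    intro x hx
    have h1 : |f' x - f' u| ≤ M * |x - u| ^ α := hHolder x hx u huIcc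
    have h2 : |x - u| ^ α ≤ (w - u) ^ α := by
      apply Real.rpow_le_rpow (abs_nonneg _) _ hα.le
      rw [abs_of_nonneg (by linarith [hx.1])]
      linarith [hx.2]
    have h3 : M * |x - u| ^ α ≤ M * (w - u) ^ α := by
      exact mul_le_mul_of_nonneg_left h2 hM
    have := abs_le.mp h1
    linarith [this.2]
  have hC2pos : 0 < C2 := lt_of_lt_of_le hc1 (le_trans (hlow u huIcc) (hup u huIcc))
  -- MVT helper
  have mvt : ∀ a b : ℝ, u ≤ a → a < b → b ≤ w →
      ∃ ξ ∈ Set.Ioo a b, f b - f a = f' ξ * (b - a) := by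
    intro a b ha hab hb
    have hsub : Set.Icc a b ⊆ Set.Icc u w := Set.Icc_subset_Icc ha hb
    have hcont' : ContinuousOn f (Set.Icc a b) := hcont.mono hsub
    have hderiv' : ∀ x ∈ Set.Ioo a b, HasDerivAt f (f' x) x := by
      intro x hx
      have hxIoo : x ∈ Set.Ioo u w := ⟨lt_of_le_of_lt ha hx.1, lt_of_lt_of_le hx.2 hb⟩
      have hmem : Set.Icc u w ∈ nhds x := Icc_mem_nhds hxIoo.1 hxIoo.2
      exact (hderiv x (Set.Ioo_subset_Icc_self hxIoo)).hasDerivAt hmem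
    obtain ⟨ξ, hξ, hslope⟩ := exists_hasDerivAt_eq_slope f f' hab hcont' hderiv'
    refine ⟨ξ, hξ, ?_⟩
    rw [hslope]
    rw [div_mul_eq_mul_div, mul_div_assoc, div_self (sub_ne_zero.mpr hab.ne'), mul_one]
  refine ⟨2 * C2 * M / (c1 * c1) + 1, by positivity, ?_⟩
  intro z1 z2 z3 z4 h1 h12 h23 h34 h4
  obtain ⟨A, hAmem, hA⟩ := mvt z1 z2 h1 h12 (by linarith)
  obtain ⟨B, hBmem, hB⟩ := mvt z3 z4 (by linarith) h34 h4
  obtain ⟨C, hCmem, hC⟩ := mvt z1 z3 h1 (h12.trans h23) (by linarith)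
  obtain ⟨D, hDmem, hD⟩ := mvt z2 z4 (by linarith) (h23.trans h34) h4
  have hAI : A ∈ Set.Icc u w := ⟨by linarith [hAmem.1], by linarith [hAmem.2]⟩
  have hBI : B ∈ Set.Icc u w := ⟨by linarith [hBmem.1], by linarith [hBmem.2]⟩
  have hCI : C ∈ Set.Icc u w := ⟨by linarith [hCmem.1], by linarith [hCmem.2]⟩
  have hDI : D ∈ Set.Icc u w := ⟨by linarith [hDmem.1], by linarith [hDmem.2]⟩
  have hAc : c1 ≤ f' A := hlow A hAI
  have hBc : c1 ≤ f' B := hlow B hBI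
  have hCc : c1 ≤ f' C := hlow C hCI
  have hDc : c1 ≤ f' D := hlow D hDI
  have hBu : f' B ≤ C2 := hup B hBI
  have hCu : f' C ≤ C2 := hup C hCI
  set t : ℝ := z4 - z1 with htdef
  have ht : 0 < t := by rw [htdef]; linarith
  have htα : 0 < t ^ α := Real.rpow_pos_of_pos ht α
  -- crDist equals ratio of derivatives
  have h21 : z2 - z1 ≠ 0 := by linarith
  have h43 : z4 - z3 ≠ 0 := by linarith
  have h31 : z3 - z1 ≠ 0 := by linarith
  have h42 : z4 - z2 ≠ 0 := by linarith
  have hCne : f' C ≠ 0 := by linarith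
  have hDne : f' D ≠ 0 := by linarith
  have key : crDist z1 z2 z3 z4 f = (f' A * f' B) / (f' C * f' D) := by
    unfold crDist Cr
    rw [show f z2 - f z1 = f' A * (z2 - z1) from hA,
        show f z4 - f z3 = f' B * (z4 - z3) from hB,
        show f z3 - f z1 = f' C * (z3 - z1) from hC,
        show f z4 - f z2 = f' D * (z4 - z2) from hD]
    field_simp
  -- Hölder bounds
  have hdist : ∀ x y : ℝ, x ∈ Set.Icc z1 z4 → y ∈ Set.Icc z1 z4 →
      |f' x - f' y| ≤ M * t ^ α := by
    intro x y hx hy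
    have hxI : x ∈ Set.Icc u w := ⟨by linarith [hx.1], by linarith [hx.2]⟩
    have hyI : y ∈ Set.Icc u w := ⟨by linarith [hy.1], by linarith [hy.2]⟩
    refine le_trans (hHolder x hxI y hyI) (mul_le_mul_of_nonneg_left ?_ hM)
    apply Real.rpow_le_rpow (abs_nonneg _) _ hα.le
    rw [abs_le]
    constructor <;> rw [htdef] <;> [linarith [hx.1, hy.2]; linarith [hx.2, hy.1]]
  have hAC : |f' A - f' C| ≤ M * t ^ α :=
    hdist A C ⟨hAmem.1.le, by linarith [hAmem.2]⟩ ⟨hCmem.1.le, by linarith [hCmem.2]⟩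
  have hBD : |f' B - f' D| ≤ M * t ^ α :=
    hdist B D ⟨by linarith [hBmem.1], hBmem.2.le⟩ ⟨by linarith [hDmem.1], hDmem.2.le⟩
  -- main estimate
  have hCD : c1 * c1 ≤ f' C * f' D :=
    mul_le_mul hCc hDc hc1.le (by linarith)
  have hnum : |f' A * f' B - f' C * f' D| ≤ 2 * C2 * M * t ^ α := by
    have heq : f' A * f' B - f' C * f' D
        = (f' A - f' C) * f' B + f' C * (f' B - f' D) := by ring
    rw [heq]
    calc |(f' A - f' C) * f' B + f' C * (f' B - f' D)|
        ≤ |(f' A - f' C) * f' B| + |f' C * (f' B - f' D)| := abs_add_le _ _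
      _ = |f' A - f' C| * |f' B| + |f' C| * |f' B - f' D| := by rw [abs_mul, abs_mul]
      _ ≤ (M * t ^ α) * C2 + C2 * (M * t ^ α) := by
          have e1 : |f' A - f' C| * |f' B| ≤ (M * t ^ α) * C2 :=
            mul_le_mul hAC (by rwa [abs_of_nonneg (by linarith)]) (abs_nonneg _)
              (by positivity)
          have e2 : |f' C| * |f' B - f' D| ≤ C2 * (M * t ^ α) :=
            mul_le_mul (by rwa [abs_of_nonneg (by linarith)]) hBD (abs_nonneg _) hC2pos.le
          linarith
      _ = 2 * C2 * M * t ^ α := by ring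
  have hCDpos : 0 < f' C * f' D := lt_of_lt_of_le (by positivity) hCD
  rw [key]
  have hrw : f' A * f' B / (f' C * f' D) - 1
      = (f' A * f' B - f' C * f' D) / (f' C * f' D) := by
    field_simp
  rw [hrw, abs_div, abs_of_pos hCDpos]
  calc |f' A * f' B - f' C * f' D| / (f' C * f' D)
      ≤ (2 * C2 * M * t ^ α) / (c1 * c1) :=
        div_le_div₀ (by positivity) hnum (by positivity) hCD
    _ ≤ (2 * C2 * M / (c1 * c1) + 1) * t ^ α := by
        have h : 2 * C2 * M * t ^ α / (c1 * c1) = (2 * C2 * M / (c1 * c1)) * t ^ α := by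
          ring
        rw [h, add_mul, one_mul]
        linarith
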